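/- Let C be a chain complex of A-modules with C_n = 0 for n < n_0, D a chain complex of A-modules with a k-linear chain contraction s (so ds + sd = 1 on D), f : C → D an A-linear chain map, and suppose each C_n is of the form A ⊗_k V_n for k-modules V_n. Then the maps κ_n : C_n → D_{n+1} defined A-linearly by κ_{n_0}(a⊗v) = a·s(f(v)) and κ_n(a⊗v) = a·s((f - κ_{n-1}∘d)(v)) for n > n_0 form an A-linear chain contraction of f, i.e. f = κ∘d + d∘κ. -/

import Mathlib

open TensorProduct

noncomputable section

private lemma tensor_gen_ext (k A : Type) [CommRing k] [Ring A] [Algebra k A]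
    (V : Type) [AddCommGroup V] [Module k V]
    (M W : Type) [AddCommGroup M] [Module A M] [AddCommGroup W] [Module A W]
    (e : M ≃ₗ[A] A ⊗[k] V) (L₁ L₂ : M →ₗ[A] W)
    (h : ∀ v : V, L₁ (e.symm ((1 : A) ⊗ₜ[k] v)) = L₂ (e.symm ((1 : A) ⊗ₜ[k] v)))
    (x : M) : L₁ x = L₂ x := by
  have hx : x = e.symm (e x) := (e.symm_apply_apply x).symm
  rw [hx]
  generalize (e x) = t
  induction t using TensorProduct.induction_on with
  | zero => simp
  | tmul a v =>
      have ht : (a ⊗ₜ[k] v : A ⊗[k] V) = a • ((1 : A) ⊗ₜ[k] v) := by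
        rw [TensorProduct.smul_tmul', smul_eq_mul, mul_one]
      simp only [ht, map_smul, h]
  | add x y hx hy => rw [map_add, map_add, map_add, hx, hy]

/-- Let `C` be a chain complex of `A`-modules vanishing below degree
`n₀`, `D` a chain complex of `A`-modules with a `k`-linear chain contraction `s`
(`d s + s d = 1`), `f : C → D` an `A`-linear chain map, and suppose each `Cₙ` is of the
form `A ⊗ₖ Vₙ`.  Then any family `κₙ : Cₙ → D_{n+1}` of `A`-linear maps satisfying the
defining equations `κ_{n₀}(1 ⊗ v) = s (f (1 ⊗ v))` and, for `n > n₀`,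
`κₙ(1 ⊗ v) = s ((f - κ_{n-1} ∘ d)(1 ⊗ v))` is an `A`-linear chain contraction of `f`:
`f = κ ∘ d + d ∘ κ`. -/
theorem chain_contraction_of_recursion
    (k A : Type) [CommRing k] [Ring A] [Algebra k A]
    (C D : ℤ → Type)
    [∀ n, AddCommGroup (C n)] [∀ n, Module A (C n)]
    [∀ n, AddCommGroup (D n)] [∀ n, Module k (D n)] [∀ n, Module A (D n)]
    [∀ n, IsScalarTower k A (D n)]
    (dC : ∀ n : ℤ, C (n + 1) →ₗ[A] C n) (dD : ∀ n : ℤ, D (n + 1) →ₗ[A] D n)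
    (hC2 : ∀ n, dC n ∘ₗ dC (n + 1) = 0) (hD2 : ∀ n, dD n ∘ₗ dD (n + 1) = 0)
    (n₀ : ℤ) (hbot : ∀ n : ℤ, n < n₀ → Subsingleton (C n))
    (V : ℤ → Type) [∀ n, AddCommGroup (V n)] [∀ n, Module k (V n)]
    (e : ∀ n, C n ≃ₗ[A] A ⊗[k] V n)
    (f : ∀ n, C n →ₗ[A] D n)
    (hf : ∀ n, dD n ∘ₗ f (n + 1) = f n ∘ₗ dC n)
    (s : ∀ n : ℤ, D n →ₗ[k] D (n + 1))
    (hs : ∀ (n : ℤ) (x : D (n + 1)), s n (dD n x) + dD (n + 1) (s (n + 1) x) = x)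
    (κ : ∀ n : ℤ, C n →ₗ[A] D (n + 1))
    (hbase : ∀ v : V n₀,
      κ n₀ ((e n₀).symm ((1 : A) ⊗ₜ[k] v)) = s n₀ (f n₀ ((e n₀).symm ((1 : A) ⊗ₜ[k] v))))
    (hstep : ∀ n : ℤ, n₀ ≤ n → ∀ v : V (n + 1),
      κ (n + 1) ((e (n + 1)).symm ((1 : A) ⊗ₜ[k] v)) =
        s (n + 1) (f (n + 1) ((e (n + 1)).symm ((1 : A) ⊗ₜ[k] v)) -
          κ n (dC n ((e (n + 1)).symm ((1 : A) ⊗ₜ[k] v))))) :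
    ∀ (n : ℤ) (x : C (n + 1)),
      f (n + 1) x = κ n (dC n x) + dD (n + 1) (κ (n + 1) x) := by
  -- A reformulation of the base case with a substitutable index.
  have base : ∀ m : ℤ, m + 1 = n₀ → ∀ x : C (m + 1),
      f (m + 1) x = κ m (dC m x) + dD (m + 1) (κ (m + 1) x) := by
    intro m hm
    subst hm
    haveI : Subsingleton (C m) := hbot m (by omega)
    refine tensor_gen_ext k A (V (m + 1)) (C (m + 1)) (D (m + 1)) (e (m + 1))
      (f (m + 1)) ((κ m) ∘ₗ (dC m) + (dD (m + 1)) ∘ₗ (κ (m + 1))) ?_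
    intro v
    set g := (e (m + 1)).symm ((1 : A) ⊗ₜ[k] v) with hg
    have hd0 : dC m g = 0 := Subsingleton.elim _ _
    have hκ : κ (m + 1) g = s (m + 1) (f (m + 1) g) := hbase v
    have hdy : dD m (f (m + 1) g) = 0 := by
      have := LinearMap.congr_fun (hf m) g
      simp only [LinearMap.comp_apply] at this
      rw [this, hd0, map_zero]
    have := hs m (f (m + 1) g)
    rw [hdy, map_zero, zero_add] at this
    simp only [LinearMap.add_apply, LinearMap.comp_apply, hd0, map_zero, zero_add, hκ, this]
  suffices H : ∀ n : ℤ, n₀ - 1 ≤ n → ∀ x : C (n + 1),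
      f (n + 1) x = κ n (dC n x) + dD (n + 1) (κ (n + 1) x) by
    intro n x
    rcases le_or_gt (n₀ - 1) n with h | h
    · exact H n h x
    · haveI := hbot (n + 1) (by omega)
      have hx : x = 0 := Subsingleton.elim x 0
      subst hx
      simp
  refine Int.le_induction (base (n₀ - 1) (by ring)) ?_
  intro n hn ih
  refine tensor_gen_ext k A (V (n + 1 + 1)) (C (n + 1 + 1)) (D (n + 1 + 1)) (e (n + 1 + 1))
    (f (n + 1 + 1)) ((κ (n + 1)) ∘ₗ (dC (n + 1)) + (dD (n + 1 + 1)) ∘ₗ (κ (n + 1 + 1))) ?_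
  intro v
  set g := (e (n + 1 + 1)).symm ((1 : A) ⊗ₜ[k] v) with hg
  set y := f (n + 1 + 1) g - κ (n + 1) (dC (n + 1) g) with hy
  have hκ : κ (n + 1 + 1) g = s (n + 1 + 1) y := hstep (n + 1) (by omega) v
  have hdy : dD (n + 1) y = 0 := by
    have h1 : dD (n + 1) (f (n + 1 + 1) g) = f (n + 1) (dC (n + 1) g) := by
      have := LinearMap.congr_fun (hf (n + 1)) g
      simpa only [LinearMap.comp_apply] using this
    have h2 := ih (dC (n + 1) g)
    have h3 : dC n (dC (n + 1) g) = 0 := by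
      have := LinearMap.congr_fun (hC2 n) g
      simpa only [LinearMap.comp_apply, LinearMap.zero_apply] using this
    rw [h3, map_zero, zero_add] at h2
    rw [hy, map_sub, h1, ← h2, sub_self]
  have hsy := hs (n + 1) y
  rw [hdy, map_zero, zero_add] at hsy
  simp only [LinearMap.add_apply, LinearMap.comp_apply, hκ, hsy]
  rw [hy]
  abel

end
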